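/- In Setup B, let J₁, J₂ ∈ Λ with n+1 ∈ J₁ and n+1 ∈ J₂, let c¹ = (c¹_i)_{i∈J₁} and c² = (c²_i)_{i∈J₂} be families of integers, and fix choices i_{1,0} ∈ I'∖J₁ and i_{2,0} ∈ I'∖J₂ defining F(J₁,c¹) and F(J₂,c²). If C(J₁,c¹) is not contained in C(J₂,c²), then F(J₁,c¹) is not contained in F(J₂,c²), and the set difference F(J₁,c¹) ∖ F(J₂,c²), equipped with the subspace topology from ℝⁿ, is a contractible topological space. -/

import Mathlib

open scoped RealInnerProductSpace BigOperators

noncomputable section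

/-- Euclidean space `ℝⁿ` with the standard inner product. -/
abbrev E (n : ℕ) : Type := EuclideanSpace ℝ (Fin n)

/-- The index set `I' = {1,…,n'}` inside `Ī = {1,…,n+1}` (index `Fin.last n`
plays the role of `n+1`). -/
def Iprime (n n' : ℕ) : Finset (Fin (n + 1)) := Finset.univ.filter fun i => i.val < n'

/-- `C(J,c) := {x ∈ ℝⁿ : ⟨x, b_i⟩ > c_i for all i ∈ J}`. -/
def CSet (n : ℕ) (b : Fin (n + 1) → E n) (J : Finset (Fin (n + 1)))
    (c : Fin (n + 1) → ℤ) : Set (E n) :=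
  {x | ∀ i ∈ J, (c i : ℝ) < ⟪x, b i⟫}

/-- A multi-index `𝔪 = (m_i)_{i ∈ I'∖{i₀}}` is admissible if `m_i ≥ 0` for every
`i ∈ I' ∩ J` (recall `i₀ ∉ J`). -/
def Admissible (n n' : ℕ) (J : Finset (Fin (n + 1))) (m : Fin (n + 1) → ℤ) : Prop :=
  ∀ i ∈ Iprime n n' ∩ J, 0 ≤ m i

/-- The ceiling bound
`⌈(c_{n+1} − Σ_{i∈I'∩J} α_i(c_i+m_i) − Σ_{i∈I'∩K₁} α_i m_i)/α_{i₀}⌉`,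
where `K₁ = Ī∖(J∪{i₀})`, so `I'∩K₁ = (I'∖J)∖{i₀}`. -/
def ceilB (n n' : ℕ) (α : Fin (n + 1) → ℚ) (J : Finset (Fin (n + 1)))
    (i₀ : Fin (n + 1)) (c m : Fin (n + 1) → ℤ) : ℤ :=
  ⌈((c (Fin.last n) : ℚ) - ∑ i ∈ Iprime n n' ∩ J, α i * ((c i : ℚ) + (m i : ℚ))
      - ∑ i ∈ (Iprime n n' \ J).erase i₀, α i * (m i : ℚ)) / α i₀⌉

/-- `V(J,c,𝔪)` as in Setup B. -/
def VSet (n n' : ℕ) (b : Fin (n + 1) → E n) (α : Fin (n + 1) → ℚ)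
    (J : Finset (Fin (n + 1))) (i₀ : Fin (n + 1)) (c m : Fin (n + 1) → ℤ) :
    Set (E n) :=
  {x | (∀ i ∈ Iprime n n' ∩ J, ((c i : ℝ) + (m i : ℝ)) < ⟪x, b i⟫)
    ∧ (∀ i ∈ (Iprime n n' \ J).erase i₀, (m i : ℝ) < ⟪x, b i⟫)
    ∧ (∀ i ∈ (J \ Iprime n n').erase (Fin.last n), (c i : ℝ) < ⟪x, b i⟫)
    ∧ ((ceilB n n' α J i₀ c m : ℝ) < ⟪x, b i₀⟫)}

/-- `F(J,c) := ⋃_{𝔪 admissible} V(J,c,𝔪)` (for `n+1 ∈ J`, with the choice `i₀`). -/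
def FSetB (n n' : ℕ) (b : Fin (n + 1) → E n) (α : Fin (n + 1) → ℚ)
    (J : Finset (Fin (n + 1))) (i₀ : Fin (n + 1)) (c : Fin (n + 1) → ℤ) : Set (E n) :=
  {x | ∃ m : Fin (n + 1) → ℤ, Admissible n n' J m ∧ x ∈ VSet n n' b α J i₀ c m}

/-- `F(J,c)` in general: the union above when `n+1 ∈ J`, and `C(J,c)` otherwise. -/
def FSetB' (n n' : ℕ) (b : Fin (n + 1) → E n) (α : Fin (n + 1) → ℚ)
    (J : Finset (Fin (n + 1))) (i₀ : Fin (n + 1)) (c : Fin (n + 1) → ℤ) : Set (E n) :=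
  if Fin.last n ∈ J then FSetB n n' b α J i₀ c else CSet n b J c

section Stmt4Aux

namespace Stmt4

variable {n : ℕ}

/-- straight-line interpolation in `Fin n → ℝ`. -/
def seg (w w' : Fin n → ℝ) (t : ℝ) : Fin n → ℝ := fun j => (1-t) * w j + t * w' j

lemma seg_zero (w w' : Fin n → ℝ) : seg w w' 0 = w := by funext j; simp [seg]

lemma seg_one (w w' : Fin n → ℝ) : seg w w' 1 = w' := by funext j; simp [seg]

lemma seg_ge_left {r q t : ℝ} (h : r ≤ q) (ht0 : 0 ≤ t) : r ≤ (1-t)*r + t*q := by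
  nlinarith [mul_nonneg ht0 (sub_nonneg.2 h)]

lemma seg_le_right {r q t : ℝ} (h : r ≤ q) (ht1 : t ≤ 1) : (1-t)*r + t*q ≤ q := by
  nlinarith [mul_nonneg (sub_nonneg.2 ht1) (sub_nonneg.2 h)]

lemma seg_le_left {r q t : ℝ} (h : q ≤ r) (ht0 : 0 ≤ t) : (1-t)*r + t*q ≤ r := by
  nlinarith [mul_nonneg ht0 (sub_nonneg.2 h)]

lemma seg_ge_right {r q t : ℝ} (h : q ≤ r) (ht1 : t ≤ 1) : q ≤ (1-t)*r + t*q := by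
  nlinarith [mul_nonneg (sub_nonneg.2 ht1) (sub_nonneg.2 h)]

lemma seg_gt {c r p t : ℝ} (h1 : c < r) (h2 : c < p) (ht0 : 0 ≤ t) (ht1 : t ≤ 1) :
    c < (1-t)*r + t*p := by
  rcases eq_or_lt_of_le ht1 with rfl | ht
  · have : (1-(1:ℝ))*r + 1*p = p := by ring
    rw [this]; exact h2
  · nlinarith [mul_pos (sub_pos.2 ht) (sub_pos.2 h1), mul_nonneg ht0 (sub_pos.2 h2).le]

/-- the staircase sum `σ`. -/
def sig (P : Finset (Fin n)) (a : Fin n → ℚ) (z : Fin n → ℝ) : ℚ :=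
  ∑ j ∈ P, a j * ((⌈z j⌉ : ℚ) - 1)

def lam (P : Finset (Fin n)) (a : Fin n → ℚ) (z : Fin n → ℝ) : ℝ :=
  ∑ j ∈ P, (a j : ℝ) * z j

/-- model set. -/
def Mdl (P S : Finset (Fin n)) (a : Fin n → ℚ) (d : Fin n → ℤ) (e : ℤ) : Set (Fin n → ℝ) :=
  {z | (∀ j ∈ S, (d j : ℝ) < z j) ∧ (e : ℚ) ≤ sig P a z}

def upd (z : Fin n → ℝ) (u : Fin n) (v : ℝ) : Fin n → ℝ := fun j => if j = u then v else z j

/-- restrict an ambient self-map to a subtype. -/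
def restr {S : Set (Fin n → ℝ)} (f : (Fin n → ℝ) → (Fin n → ℝ)) (hf : Continuous f)
    (h : ∀ z ∈ S, f z ∈ S) : C(S, S) :=
  ⟨fun p => ⟨f p, h p p.2⟩, (hf.comp continuous_subtype_val).subtype_mk _⟩

lemma homotopic_restr {S : Set (Fin n → ℝ)} {f g : (Fin n → ℝ) → (Fin n → ℝ)}
    (hf : Continuous f) (hg : Continuous g)
    (hfS : ∀ z ∈ S, f z ∈ S) (hgS : ∀ z ∈ S, g z ∈ S)
    (hseg : ∀ z ∈ S, ∀ t : ℝ, 0 ≤ t → t ≤ 1 → seg (f z) (g z) t ∈ S) :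
    (restr f hf hfS).Homotopic (restr g hg hgS) := by
  refine ⟨⟨⟨fun q => ⟨seg (f q.2) (g q.2) q.1, hseg _ q.2.2 _ q.1.2.1 q.1.2.2⟩, ?_⟩, ?_, ?_⟩⟩
  · apply Continuous.subtype_mk
    apply continuous_pi
    intro j
    have hc1 : Continuous fun q : (unitInterval × S) => (q.1 : ℝ) :=
      continuous_induced_dom.comp continuous_fst
    have hc2 : Continuous fun q : (unitInterval × S) => f q.2 j :=
      (continuous_apply j).comp (hf.comp (continuous_subtype_val.comp continuous_snd))
    have hc3 : Continuous fun q : (unitInterval × S) => g q.2 j :=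
      (continuous_apply j).comp (hg.comp (continuous_subtype_val.comp continuous_snd))
    exact ((continuous_const.sub hc1).mul hc2).add (hc1.mul hc3)
  · intro p; exact Subtype.ext (by simp [seg_zero]; rfl)
  · intro p; exact Subtype.ext (by simp [seg_one]; rfl)

variable {P S : Finset (Fin n)} {a : Fin n → ℚ} {z w : Fin n → ℝ} {u : Fin n} {v : ℝ}
  {d : Fin n → ℤ} {e : ℤ}

lemma sig_mono (ha : ∀ j ∈ P, 0 ≤ a j) (h : ∀ j ∈ P, z j ≤ w j) : sig P a z ≤ sig P a w := by
  refine Finset.sum_le_sum fun j hj => ?_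
  have : (⌈z j⌉ : ℚ) ≤ (⌈w j⌉ : ℚ) := by exact_mod_cast Int.ceil_le_ceil (h j hj)
  nlinarith [ha j hj]

lemma sig_cast : ((sig P a z : ℚ) : ℝ) = ∑ j ∈ P, (a j : ℝ) * ((⌈z j⌉ : ℝ) - 1) := by
  unfold sig; push_cast
  exact Finset.sum_congr rfl fun j _ => by ring

lemma sig_le_lam (ha : ∀ j ∈ P, 0 ≤ a j) : ((sig P a z : ℚ) : ℝ) ≤ lam P a z := by
  rw [sig_cast]
  refine Finset.sum_le_sum fun j hj => ?_
  have h1 : ((⌈z j⌉ : ℝ) - 1) ≤ z j := by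
    have := Int.ceil_lt_add_one (z j); linarith
  have h2 : (0:ℝ) ≤ (a j : ℝ) := by exact_mod_cast ha j hj
  nlinarith

lemma lam_le_sig_add (ha : ∀ j ∈ P, 0 ≤ a j) (hs : ∑ j ∈ P, a j ≤ 1) :
    lam P a z ≤ ((sig P a z : ℚ) : ℝ) + 1 := by
  rw [sig_cast]
  have key : lam P a z ≤ (∑ j ∈ P, (a j : ℝ) * ((⌈z j⌉ : ℝ) - 1)) + ∑ j ∈ P, (a j : ℝ) := by
    rw [← Finset.sum_add_distrib]
    refine Finset.sum_le_sum fun j hj => ?_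
    have h1 : z j ≤ (⌈z j⌉ : ℝ) := Int.le_ceil _
    have h2 : (0:ℝ) ≤ (a j : ℝ) := by exact_mod_cast ha j hj
    nlinarith
  have : (∑ j ∈ P, (a j : ℝ)) ≤ 1 := by exact_mod_cast hs
  linarith

lemma sig_lower {m : Fin n → ℤ} (ha : ∀ j ∈ P, 0 ≤ a j)
    (h : ∀ j ∈ P, (m j : ℝ) < z j) : ∑ j ∈ P, a j * (m j : ℚ) ≤ sig P a z := by
  refine Finset.sum_le_sum fun j hj => ?_
  have : m j < ⌈z j⌉ := Int.lt_ceil.2 (h j hj)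
  have h2 : (m j : ℚ) ≤ (⌈z j⌉ : ℚ) - 1 := by
    have : (m j : ℚ) + 1 ≤ (⌈z j⌉ : ℚ) := by exact_mod_cast this
    linarith
  nlinarith [ha j hj]

lemma den_dvd_mul (q : ℚ) (t : ℕ) (h : q.den ∣ t) : ∃ k : ℤ, (t : ℚ) * q = (k : ℚ) := by
  obtain ⟨s, hs⟩ := h
  refine ⟨(s : ℤ) * q.num, ?_⟩
  have hden : ((q.den : ℚ)) ≠ 0 := by exact_mod_cast q.den_nz
  have hq : (q.num : ℚ) / (q.den : ℚ) = q := Rat.num_div_den q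
  calc (t : ℚ) * q = ((q.den * s : ℕ) : ℚ) * ((q.num : ℚ) / (q.den : ℚ)) := by rw [hq, hs]
    _ = (((s : ℤ) * q.num : ℤ) : ℚ) := by push_cast; field_simp

lemma sig_lattice (z : Fin n → ℝ) :
    ∃ k : ℤ, ((∏ j ∈ P, (a j).den : ℕ) : ℚ) * sig P a z = (k : ℚ) := by
  classical
  have key : ∀ j ∈ P, ∃ k : ℤ,
      ((∏ i ∈ P, (a i).den : ℕ) : ℚ) * (a j * ((⌈z j⌉ : ℚ) - 1)) = (k : ℚ) := by
    intro j hj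
    obtain ⟨k, hk⟩ := den_dvd_mul (a j) (∏ i ∈ P, (a i).den) (Finset.dvd_prod_of_mem _ hj)
    refine ⟨k * (⌈z j⌉ - 1), ?_⟩
    rw [← mul_assoc, hk]
    push_cast
    ring
  choose k hk using key
  refine ⟨∑ j ∈ P.attach, k j j.2, ?_⟩
  calc ((∏ i ∈ P, (a i).den : ℕ) : ℚ) * sig P a z
      = ∑ j ∈ P.attach, ((∏ i ∈ P, (a i).den : ℕ) : ℚ) * (a j * ((⌈(z j)⌉ : ℚ) - 1)) := by
        unfold sig
        rw [Finset.mul_sum, ← Finset.sum_attach P (fun j => ((∏ i ∈ P, (a i).den : ℕ) : ℚ) * (a j * ((⌈(z j)⌉ : ℚ) - 1)))]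
    _ = ∑ j ∈ P.attach, ((k j j.2 : ℤ) : ℚ) := Finset.sum_congr rfl fun j _ => hk j j.2
    _ = ((∑ j ∈ P.attach, k j j.2 : ℤ) : ℚ) := by push_cast; rfl

lemma upd_same : upd z u v u = v := by simp [upd]

lemma upd_ne {j : Fin n} (h : j ≠ u) : upd z u v j = z j := by simp [upd, h]

lemma upd_self : upd z u (z u) = z := by
  funext j; by_cases h : j = u <;> simp [upd, h]

lemma lam_split (hu : u ∈ P) :
    lam P a z = (a u : ℝ) * z u + ∑ j ∈ P.erase u, (a j : ℝ) * z j :=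
  (Finset.add_sum_erase _ _ hu).symm

lemma lam_upd (hu : u ∈ P) :
    lam P a (upd z u v) = (a u : ℝ) * v + ∑ j ∈ P.erase u, (a j : ℝ) * z j := by
  rw [lam_split hu, upd_same]
  congr 1
  exact Finset.sum_congr rfl fun j hj => by rw [upd_ne (Finset.ne_of_mem_erase hj)]

lemma lam_seg (t : ℝ) : lam P a (seg z w t) = (1-t) * lam P a z + t * lam P a w := by
  unfold lam seg
  rw [Finset.mul_sum, Finset.mul_sum, ← Finset.sum_add_distrib]
  exact Finset.sum_congr rfl fun j _ => by ring

lemma not_mem_Mdl_iff : z ∉ Mdl P S a d e ↔ (∃ j ∈ S, z j ≤ (d j : ℝ)) ∨ sig P a z < (e : ℚ) := by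
  unfold Mdl
  simp only [Set.mem_setOf_eq, not_and_or, not_forall, not_lt, not_le]
  constructor
  · rintro (⟨j, hj, h⟩ | h)
    · exact Or.inl ⟨j, hj, h⟩
    · exact Or.inr h
  · rintro (⟨j, hj, h⟩ | h)
    · exact Or.inl ⟨j, hj, h⟩
    · exact Or.inr h

/-- the `λ = L` level for coordinate `u`. -/
def theta (P : Finset (Fin n)) (a : Fin n → ℚ) (u : Fin n) (L : ℚ) (z : Fin n → ℝ) : ℝ :=
  ((L : ℝ) - ∑ j ∈ P.erase u, (a j : ℝ) * z j) / (a u : ℝ)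

lemma theta_le_iff {L : ℚ} (hu : u ∈ P) (hau : 0 < a u) :
    theta P a u L z ≤ z u ↔ (L : ℝ) ≤ lam P a z := by
  have ha : (0:ℝ) < (a u : ℝ) := by exact_mod_cast hau
  rw [theta, div_le_iff₀ ha, lam_split hu]
  constructor <;> intro h <;> nlinarith

lemma lam_upd_theta {L : ℚ} (hu : u ∈ P) (hau : 0 < a u) :
    lam P a (upd z u (theta P a u L z)) = (L : ℝ) := by
  have ha : ((a u : ℝ)) ≠ 0 := by positivity
  rw [lam_upd hu, theta]
  field_simp
  ring

lemma theta_continuous {L : ℚ} : Continuous (theta P a u L) := by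
  apply Continuous.div_const
  apply Continuous.sub continuous_const
  exact continuous_finset_sum _ fun j _ => (continuous_const.mul (continuous_apply j))


theorem caseA (P S₁ S₂ : Finset (Fin n)) (a : Fin n → ℚ) (d₁ d₂ : Fin n → ℤ) (e₁ e₂ : ℤ)
    (u₁ u₂ : Fin n)
    (ha : ∀ j ∈ P, 0 < a j) (hsum : ∑ j ∈ P, a j ≤ 1)
    (hu₁ : u₁ ∈ P) (hu₁S : u₁ ∉ S₁) (hu₂ : u₂ ∈ P) (hu₂S : u₂ ∉ S₂)
    (he : e₁ < e₂) :
    (Mdl P S₁ a d₁ e₁ \ Mdl P S₂ a d₂ e₂).Nonempty ∧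
      ContractibleSpace ↥(Mdl P S₁ a d₁ e₁ \ Mdl P S₂ a d₂ e₂) := by
  classical
  have hann : ∀ j ∈ P, 0 ≤ a j := fun j hj => le_of_lt (ha j hj)
  set W := Mdl P S₁ a d₁ e₁ \ Mdl P S₂ a d₂ e₂ with hWdef
  set Q : ℕ := ∏ j ∈ P, (a j).den with hQdef
  have hQ : 0 < Q := Finset.prod_pos fun j _ => (a j).pos
  have hQQ : (0:ℚ) < (Q:ℚ) := by exact_mod_cast hQ
  set L : ℚ := (e₁ : ℚ) + 1 - 1/(2*(Q:ℚ)) with hLdef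
  have hhalf : (0:ℚ) < 1/(2*(Q:ℚ)) := by positivity
  have he' : (e₁:ℚ) + 1 ≤ (e₂:ℚ) := by exact_mod_cast he
  -- λ ≥ L implies the `σ ≥ e₁` condition
  have latA : ∀ z : Fin n → ℝ, (L:ℝ) ≤ lam P a z → (e₁:ℚ) ≤ sig P a z := by
    intro z hlz
    have h1 : lam P a z ≤ ((sig P a z : ℚ):ℝ) + 1 := lam_le_sig_add hann hsum
    have h2 : ((L : ℚ):ℝ) - 1 ≤ ((sig P a z : ℚ):ℝ) := by linarith
    have h3 : L - 1 ≤ sig P a z := by exact_mod_cast h2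
    obtain ⟨k, hk⟩ := sig_lattice (P := P) (a := a) z
    have h4 : (Q:ℚ) * (L - 1) ≤ (k:ℚ) := by
      rw [← hQdef] at hk
      rw [← hk]
      exact mul_le_mul_of_nonneg_left h3 (le_of_lt hQQ)
    have h5 : (Q:ℚ)*(e₁:ℚ) - 1/2 ≤ (k:ℚ) := by
      have hexp : (Q:ℚ) * (L - 1) = (Q:ℚ)*(e₁:ℚ) - 1/2 := by
        rw [hLdef]
        field_simp
        ring
      linarith [h4, hexp ▸ h4]
    have h6 : ((Q:ℤ)*e₁ : ℤ) ≤ k := by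
      have hlt : (((Q:ℤ)*e₁ : ℤ) : ℚ) < (k:ℚ) + 1 := by push_cast; linarith
      have : ((Q:ℤ)*e₁ : ℤ) < k + 1 := by exact_mod_cast hlt
      omega
    have h7 : (Q:ℚ)*(e₁:ℚ) ≤ (Q:ℚ) * sig P a z := by
      rw [← hQdef] at hk
      rw [hk]
      exact_mod_cast h6
    exact le_of_mul_le_mul_left h7 hQQ
  -- λ ≤ L implies the failure condition `σ < e₂`
  have latB : ∀ z : Fin n → ℝ, lam P a z ≤ (L:ℝ) → sig P a z < (e₂:ℚ) := by
    intro z h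
    have h1 : ((sig P a z:ℚ):ℝ) ≤ ((L:ℚ):ℝ) := le_trans (sig_le_lam hann) h
    have h2 : sig P a z ≤ L := by exact_mod_cast h1
    have : L < (e₁:ℚ) + 1 := by rw [hLdef]; linarith
    linarith
  -- stage maps
  set th2 : (Fin n → ℝ) → ℝ := theta P a u₂ L with hth2
  set th1 : (Fin n → ℝ) → ℝ := theta P a u₁ L with hth1
  set s1 : (Fin n → ℝ) → (Fin n → ℝ) := fun z => upd z u₂ (max (z u₂) (th2 z)) with hs1
  set s2 : (Fin n → ℝ) → (Fin n → ℝ) := fun z => upd z u₁ (th1 z) with hs2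
  set r2 : (Fin n → ℝ) → (Fin n → ℝ) := fun z => s2 (s1 z) with hr2def
  set base : Fin n → ℝ := fun j => if j ∈ S₁ then (d₁ j:ℝ)+1 else 0 with hbase
  set pst : Fin n → ℝ := s2 base with hpst
  have hau1 : (0:ℝ) < (a u₁ : ℝ) := by exact_mod_cast ha u₁ hu₁
  have hau2 : (0:ℝ) < (a u₂ : ℝ) := by exact_mod_cast ha u₂ hu₂
  -- continuity
  have hth2c : Continuous th2 := theta_continuous
  have hth1c : Continuous th1 := theta_continuous
  have hupdc : ∀ (u : Fin n) (g : (Fin n → ℝ) → ℝ), Continuous g →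
      Continuous (fun z : Fin n → ℝ => upd z u (g z)) := by
    intro u g hg
    apply continuous_pi
    intro j
    by_cases h : j = u
    · simpa [upd, h] using hg
    · simpa [upd, h] using (continuous_apply j)
  have hs1c : Continuous s1 := hupdc u₂ _ ((continuous_apply u₂).max hth2c)
  have hs2c : Continuous s2 := hupdc u₁ _ hth1c
  have hr2c : Continuous r2 := hs2c.comp hs1c
  -- stage 1 membership
  have O1 : ∀ z ∈ W, ∀ t : ℝ, 0 ≤ t → t ≤ 1 → seg z (s1 z) t ∈ W := by
    intro z hz t ht0 ht1
    obtain ⟨⟨hz1, hz2⟩, hz3⟩ := hz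
    set w := seg z (s1 z) t with hw
    have hwj : ∀ j, j ≠ u₂ → w j = z j := by
      intro j hj
      have : s1 z j = z j := upd_ne hj
      simp only [hw, seg, this]; ring
    have hwu : w u₂ = (1-t)*z u₂ + t * max (z u₂) (th2 z) := by
      have : s1 z u₂ = max (z u₂) (th2 z) := upd_same
      simp only [hw, seg, this]
    have hge : ∀ j, z j ≤ w j := by
      intro j
      by_cases h : j = u₂
      · rw [h, hwu]
        exact seg_ge_left (le_max_left _ _) ht0
      · rw [hwj j h]
    refine ⟨⟨fun j hj => lt_of_lt_of_le (hz1 j hj) (hge j), le_trans hz2 (sig_mono hann fun j _ => hge j)⟩, ?_⟩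
    rw [not_mem_Mdl_iff] at hz3 ⊢
    rcases hz3 with ⟨j, hjS, hjle⟩ | hsig
    · exact Or.inl ⟨j, hjS, by rw [hwj j (by rintro rfl; exact hu₂S hjS)]; exact hjle⟩
    · right
      by_cases hc : th2 z ≤ z u₂
      · have hwz : w = z := by
          funext j
          by_cases h : j = u₂
          · rw [h, hwu, max_eq_left hc]; ring
          · exact hwj j h
        rw [hwz]; exact hsig
      · push_neg at hc
        apply latB
        have hwu' : w u₂ ≤ th2 z := by
          rw [hwu, max_eq_right (le_of_lt hc)]
          exact seg_le_right (le_of_lt hc) ht1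
        have hlw : lam P a w = (a u₂:ℝ) * (w u₂) + ∑ j ∈ P.erase u₂, (a j:ℝ)*z j := by
          rw [lam_split hu₂]
          congr 1
          exact Finset.sum_congr rfl fun j hj => by rw [hwj j (Finset.ne_of_mem_erase hj)]
        have hθ : (a u₂:ℝ) * th2 z + ∑ j ∈ P.erase u₂, (a j:ℝ)*z j = (L:ℝ) := by
          have h := lam_upd_theta (L := L) (z := z) hu₂ (ha u₂ hu₂)
          rw [lam_upd hu₂] at h
          exact h
        rw [hlw]
        nlinarith
  -- end state of stage 1
  have hr1 : ∀ z ∈ W, s1 z ∈ W ∧ (L:ℝ) ≤ lam P a (s1 z) := by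
    intro z hz
    constructor
    · have := O1 z hz 1 zero_le_one le_rfl
      rwa [seg_one] at this
    · have hle : th2 z ≤ max (z u₂) (th2 z) := le_max_right _ _
      have h := lam_upd_theta (L := L) (z := z) hu₂ (ha u₂ hu₂)
      rw [lam_upd hu₂] at h
      simp only [hs1]
      rw [lam_upd hu₂]
      nlinarith
  -- stage 2 membership
  have O2 : ∀ y ∈ W, (L:ℝ) ≤ lam P a y → ∀ t : ℝ, 0 ≤ t → t ≤ 1 → seg y (s2 y) t ∈ W := by
    intro y hy hLy t ht0 ht1
    obtain ⟨⟨hy1, hy2⟩, hy3⟩ := hy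
    have hθy : th1 y ≤ y u₁ := (theta_le_iff hu₁ (ha u₁ hu₁)).2 hLy
    set w := seg y (s2 y) t with hw
    have hwj : ∀ j, j ≠ u₁ → w j = y j := by
      intro j hj
      have : s2 y j = y j := upd_ne hj
      simp only [hw, seg, this]; ring
    have hwu : w u₁ = (1-t)*y u₁ + t * th1 y := by
      have : s2 y u₁ = th1 y := upd_same
      simp only [hw, seg, this]
    have hle : ∀ j, w j ≤ y j := by
      intro j
      by_cases h : j = u₁
      · rw [h, hwu]; exact seg_le_left hθy ht0
      · rw [hwj j h]
    have hwl : th1 y ≤ w u₁ := by rw [hwu]; exact seg_ge_right hθy ht1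
    have hlamw : (L:ℝ) ≤ lam P a w := by
      have hlw : lam P a w = (a u₁:ℝ) * (w u₁) + ∑ j ∈ P.erase u₁, (a j:ℝ)*y j := by
        rw [lam_split hu₁]
        congr 1
        exact Finset.sum_congr rfl fun j hj => by rw [hwj j (Finset.ne_of_mem_erase hj)]
      have hθ : (a u₁:ℝ) * th1 y + ∑ j ∈ P.erase u₁, (a j:ℝ)*y j = (L:ℝ) := by
        have h := lam_upd_theta (L := L) (z := y) hu₁ (ha u₁ hu₁)
        rw [lam_upd hu₁] at h
        exact h
      rw [hlw]
      nlinarith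
    refine ⟨⟨?_, latA w hlamw⟩, ?_⟩
    · intro j hj
      have hne : j ≠ u₁ := by rintro rfl; exact hu₁S hj
      rw [hwj j hne]; exact hy1 j hj
    · rw [not_mem_Mdl_iff] at hy3 ⊢
      rcases hy3 with ⟨j, hjS, hjle⟩ | hsig
      · exact Or.inl ⟨j, hjS, le_trans (hle j) hjle⟩
      · exact Or.inr (lt_of_le_of_lt (sig_mono hann fun j _ => hle j) hsig)
  -- end state of stage 2
  have hr2W : ∀ z ∈ W, r2 z ∈ W ∧ lam P a (r2 z) = (L:ℝ) := by
    intro z hz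
    obtain ⟨hs1W, hs1L⟩ := hr1 z hz
    constructor
    · have := O2 (s1 z) hs1W hs1L 1 zero_le_one le_rfl
      rwa [seg_one] at this
    · simp only [hr2def, hs2, hth1]
      exact lam_upd_theta (L := L) hu₁ (ha u₁ hu₁)
  -- target point
  have hpstL : lam P a pst = (L:ℝ) := by
    simp only [hpst, hs2, hth1]
    exact lam_upd_theta (L := L) hu₁ (ha u₁ hu₁)
  have hpst1 : ∀ j ∈ S₁, (d₁ j : ℝ) < pst j := by
    intro j hj
    have hne : j ≠ u₁ := by rintro rfl; exact hu₁S hj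
    have : pst j = base j := upd_ne hne
    rw [this, hbase]
    simp [hj]
  have hpstW : pst ∈ W := by
    refine ⟨⟨hpst1, latA pst (le_of_eq hpstL.symm)⟩, ?_⟩
    rw [not_mem_Mdl_iff]
    exact Or.inr (latB pst (le_of_eq hpstL))
  -- stage 3 membership
  have O3 : ∀ z ∈ W, ∀ t : ℝ, 0 ≤ t → t ≤ 1 → seg (r2 z) pst t ∈ W := by
    intro z hz t ht0 ht1
    obtain ⟨hzW, hzL⟩ := hr2W z hz
    obtain ⟨⟨hy1, _⟩, _⟩ := hzW
    set w := seg (r2 z) pst t with hw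
    have hlamw : lam P a w = (L:ℝ) := by
      rw [hw, lam_seg, hzL, hpstL]; ring
    refine ⟨⟨?_, latA w (le_of_eq hlamw.symm)⟩, ?_⟩
    · intro j hj
      have h1 := hy1 j hj
      have h2 := hpst1 j hj
      show (d₁ j : ℝ) < (1-t) * (r2 z j) + t * pst j
      exact seg_gt h1 h2 ht0 ht1
    · rw [not_mem_Mdl_iff]
      exact Or.inr (latB w (le_of_eq hlamw))
  -- assemble
  have hs1W : ∀ z ∈ W, s1 z ∈ W := fun z hz => (hr1 z hz).1
  have hr2WW : ∀ z ∈ W, r2 z ∈ W := fun z hz => (hr2W z hz).1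
  have hcW : ∀ z ∈ W, (fun _ : Fin n → ℝ => pst) z ∈ W := fun _ _ => hpstW
  refine ⟨⟨pst, hpstW⟩, ?_⟩
  rw [contractible_iff_id_nullhomotopic]
  refine ⟨⟨pst, hpstW⟩, ?_⟩
  have hidW : ∀ z ∈ W, id z ∈ W := fun _ h => h
  have H1 : (restr id continuous_id hidW).Homotopic (restr s1 hs1c hs1W) :=
    homotopic_restr _ _ _ _ O1
  have H2 : (restr s1 hs1c hs1W).Homotopic (restr r2 hr2c hr2WW) :=
    homotopic_restr _ _ _ _ (fun z hz t ht0 ht1 => O2 (s1 z) ((hr1 z hz).1) ((hr1 z hz).2) t ht0 ht1)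
  have H3 : (restr r2 hr2c hr2WW).Homotopic (restr (fun _ => pst) continuous_const hcW) :=
    homotopic_restr _ _ _ _ (fun z hz t ht0 ht1 => O3 z hz t ht0 ht1)
  have Hall := (H1.trans H2).trans H3
  have e1 : (ContinuousMap.id ↥W) = restr id continuous_id hidW := by
    apply ContinuousMap.ext; intro p; rfl
  have e2 : (ContinuousMap.const ↥W ⟨pst, hpstW⟩) = restr (fun _ => pst) continuous_const hcW := by
    apply ContinuousMap.ext; intro p; rfl
  rw [e1, e2]
  exact Hall


theorem caseB (P S₁ S₂ : Finset (Fin n)) (a : Fin n → ℚ) (d₁ d₂ : Fin n → ℤ) (e₁ e₂ : ℤ)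
    (u₂ : Fin n)
    (ha : ∀ j ∈ P, 0 < a j)
    (hu₂ : u₂ ∈ P) (hu₂S : u₂ ∉ S₂)
    (he : e₂ ≤ e₁)
    (hVi : ∃ j ∈ S₂, j ∉ S₁ ∨ d₁ j < d₂ j) :
    (Mdl P S₁ a d₁ e₁ \ Mdl P S₂ a d₂ e₂).Nonempty ∧
      ContractibleSpace ↥(Mdl P S₁ a d₁ e₁ \ Mdl P S₂ a d₂ e₂) := by
  classical
  have hann : ∀ j ∈ P, 0 ≤ a j := fun j hj => le_of_lt (ha j hj)
  set W := Mdl P S₁ a d₁ e₁ \ Mdl P S₂ a d₂ e₂ with hWdef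
  set Vi : Finset (Fin n) := S₂.filter (fun j => j ∉ S₁ ∨ d₁ j < d₂ j) with hVidef
  obtain ⟨jb, hjbS₂, hjbv⟩ := hVi
  have hjb : jb ∈ Vi := Finset.mem_filter.2 ⟨hjbS₂, hjbv⟩
  have hViS₂ : Vi ⊆ S₂ := Finset.filter_subset _ _
  have hu₂Vi : u₂ ∉ Vi := fun h => hu₂S (hViS₂ h)
  have hu₂PV : u₂ ∈ P \ Vi := Finset.mem_sdiff.2 ⟨hu₂, hu₂Vi⟩
  have hViprop : ∀ j ∈ Vi, j ∈ S₁ → d₁ j < d₂ j := by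
    intro j hj hjS₁
    rcases (Finset.mem_filter.1 hj).2 with h | h
    · exact absurd hjS₁ h
    · exact h
  -- choose the big constant M
  set C : ℚ := ∑ j ∈ P ∩ Vi, a j * ((d₂ j : ℚ) - 1) with hCdef
  have hau2 : (0:ℚ) < a u₂ := ha u₂ hu₂
  set M : ℤ := max (max 1 (⌈((e₁:ℚ) - C)/(a u₂)⌉ + 1)) (P.sup' ⟨u₂, hu₂⟩ (fun j => d₁ j + 1))
    with hMdef
  have hM0 : 1 ≤ M := le_trans (le_max_left _ _) (le_max_left _ _)
  have hM1 : ∀ j ∈ P, d₁ j + 1 ≤ M :=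
    fun j hj => le_trans (Finset.le_sup' (fun j => d₁ j + 1) hj) (le_max_right _ _)
  have hMceil : ⌈((e₁:ℚ) - C)/(a u₂)⌉ + 1 ≤ M :=
    le_trans (le_max_right _ _) (le_max_left _ _)
  have hMa : (e₁:ℚ) - C ≤ a u₂ * ((M:ℚ) - 1) := by
    have h1 : ((e₁:ℚ) - C)/(a u₂) ≤ (⌈((e₁:ℚ) - C)/(a u₂)⌉ : ℚ) := Int.le_ceil _
    have h2 : ((⌈((e₁:ℚ) - C)/(a u₂)⌉ : ℤ) : ℚ) ≤ (M:ℚ) - 1 := by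
      have : (⌈((e₁:ℚ) - C)/(a u₂)⌉ : ℤ) ≤ M - 1 := by omega
      exact_mod_cast this
    have h3 : ((e₁:ℚ) - C)/(a u₂) ≤ (M:ℚ) - 1 := le_trans h1 h2
    calc (e₁:ℚ) - C = a u₂ * (((e₁:ℚ) - C)/(a u₂)) := by field_simp
      _ ≤ a u₂ * ((M:ℚ) - 1) := mul_le_mul_of_nonneg_left h3 (le_of_lt hau2)
  have hM2 : (e₁:ℚ) ≤ C + ∑ j ∈ P \ Vi, a j * ((M:ℚ) - 1) := by
    have hterm : ∀ j ∈ P \ Vi, (0:ℚ) ≤ a j * ((M:ℚ) - 1) := by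
      intro j hj
      have h1 : (0:ℚ) ≤ a j := hann j (Finset.mem_sdiff.1 hj).1
      have h2 : (0:ℚ) ≤ (M:ℚ) - 1 := by
        have : (1:ℚ) ≤ (M:ℚ) := by exact_mod_cast hM0
        linarith
      positivity
    have hsingle : a u₂ * ((M:ℚ) - 1) ≤ ∑ j ∈ P \ Vi, a j * ((M:ℚ) - 1) :=
      Finset.single_le_sum hterm hu₂PV
    linarith
  -- the integer lower-bound profile
  set lb : Fin n → ℤ := fun j => if j ∈ Vi then d₂ j - 1 else M - 1 with hlbdef
  have hlbsum : (e₁:ℚ) ≤ ∑ j ∈ P, a j * ((lb j : ℤ) : ℚ) := by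
    have hsplit : ∑ j ∈ P, a j * ((lb j : ℤ) : ℚ)
        = (∑ j ∈ P ∩ Vi, a j * ((lb j : ℤ) : ℚ)) + ∑ j ∈ P \ Vi, a j * ((lb j : ℤ) : ℚ) :=
      (Finset.sum_inter_add_sum_sdiff P Vi _).symm
    have h1 : ∑ j ∈ P ∩ Vi, a j * ((lb j : ℤ) : ℚ) = C := by
      rw [hCdef]
      refine Finset.sum_congr rfl fun j hj => ?_
      have : j ∈ Vi := (Finset.mem_inter.1 hj).2
      simp only [hlbdef, if_pos this]
      push_cast
      ring
    have h2 : ∑ j ∈ P \ Vi, a j * ((lb j : ℤ) : ℚ) = ∑ j ∈ P \ Vi, a j * ((M:ℚ) - 1) := by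
      refine Finset.sum_congr rfl fun j hj => ?_
      have : j ∉ Vi := (Finset.mem_sdiff.1 hj).2
      simp only [hlbdef, if_neg this]
      push_cast
      ring
    rw [hsplit, h1, h2]
    exact hM2
  have hsig_ge : ∀ w : Fin n → ℝ, (∀ j ∈ P, ((lb j : ℝ)) < w j) → (e₁:ℚ) ≤ sig P a w :=
    fun w hw => le_trans hlbsum (sig_lower hann hw)
  -- stage maps
  set r1 : (Fin n → ℝ) → (Fin n → ℝ) :=
    fun z j => if j ∈ Vi then max (z j) ((d₂ j : ℝ)) else z j with hr1def
  set r2 : (Fin n → ℝ) → (Fin n → ℝ) :=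
    fun z j => if j ∈ Vi then max (z j) ((d₂ j : ℝ)) else if j ∈ P then max (z j) ((M:ℝ)) else z j
    with hr2def
  set r3 : (Fin n → ℝ) → (Fin n → ℝ) :=
    fun z j => if j ∈ Vi then ((d₂ j : ℝ)) else if j ∈ P then max (z j) ((M:ℝ)) else z j
    with hr3def
  set pst : Fin n → ℝ :=
    fun j => if j ∈ Vi then ((d₂ j : ℝ)) else if j ∈ P then ((M:ℝ))
      else if j ∈ S₁ then (d₁ j : ℝ) + 1 else 0 with hpstdef
  have hr1c : Continuous r1 := by
    apply continuous_pi; intro j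
    simp only [hr1def]
    split_ifs
    · exact (continuous_apply j).max continuous_const
    · exact continuous_apply j
  have hr2c : Continuous r2 := by
    apply continuous_pi; intro j
    simp only [hr2def]
    split_ifs
    · exact (continuous_apply j).max continuous_const
    · exact (continuous_apply j).max continuous_const
    · exact continuous_apply j
  have hr3c : Continuous r3 := by
    apply continuous_pi; intro j
    simp only [hr3def]
    split_ifs
    · exact continuous_const
    · exact (continuous_apply j).max continuous_const
    · exact continuous_apply j
  -- failing coordinate
  have hfail : ∀ z ∈ W, ∃ j₀ ∈ Vi, z j₀ ≤ (d₂ j₀ : ℝ) := by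
    intro z hz
    obtain ⟨⟨hz1, hz2⟩, hz3⟩ := hz
    rw [not_mem_Mdl_iff] at hz3
    rcases hz3 with ⟨j, hjS, hjle⟩ | hsig
    · refine ⟨j, ?_, hjle⟩
      refine Finset.mem_filter.2 ⟨hjS, ?_⟩
      by_cases hjS₁ : j ∈ S₁
      · refine Or.inr ?_
        have h1 := hz1 j hjS₁
        have : (d₁ j : ℝ) < (d₂ j : ℝ) := lt_of_lt_of_le h1 hjle
        exact_mod_cast this
      · exact Or.inl hjS₁
    · have : (e₂:ℚ) ≤ sig P a z := le_trans (by exact_mod_cast he) hz2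
      exact absurd hsig (not_lt.2 this)
  -- stage 1
  have O1 : ∀ z ∈ W, ∀ t : ℝ, 0 ≤ t → t ≤ 1 → seg z (r1 z) t ∈ W := by
    intro z hz t ht0 ht1
    obtain ⟨j₀, hj₀Vi, hj₀le⟩ := hfail z hz
    obtain ⟨⟨hz1, hz2⟩, _⟩ := hz
    set w := seg z (r1 z) t with hw
    have hge : ∀ j, z j ≤ w j := by
      intro j
      show z j ≤ (1-t) * z j + t * (r1 z j)
      by_cases h : j ∈ Vi
      · simp only [hr1def, if_pos h]
        exact seg_ge_left (le_max_left _ _) ht0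
      · simp only [hr1def, if_neg h]
        have : (1-t) * z j + t * z j = z j := by ring
        rw [this]
    refine ⟨⟨fun j hj => lt_of_lt_of_le (hz1 j hj) (hge j),
      le_trans hz2 (sig_mono hann fun j _ => hge j)⟩, ?_⟩
    rw [not_mem_Mdl_iff]
    refine Or.inl ⟨j₀, hViS₂ hj₀Vi, ?_⟩
    show (1-t) * z j₀ + t * (r1 z j₀) ≤ (d₂ j₀ : ℝ)
    simp only [hr1def, if_pos hj₀Vi, max_eq_right hj₀le]
    exact seg_le_right hj₀le ht1
  have hr1W : ∀ z ∈ W, r1 z ∈ W := by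
    intro z hz
    have := O1 z hz 1 zero_le_one le_rfl
    rwa [seg_one] at this
  -- stage 2
  have O2 : ∀ z ∈ W, ∀ t : ℝ, 0 ≤ t → t ≤ 1 → seg (r1 z) (r2 z) t ∈ W := by
    intro z hz t ht0 ht1
    obtain ⟨j₀, hj₀Vi, hj₀le⟩ := hfail z hz
    obtain ⟨⟨hy1, hy2⟩, _⟩ := hr1W z hz
    set w := seg (r1 z) (r2 z) t with hw
    have hge : ∀ j, r1 z j ≤ w j := by
      intro j
      show r1 z j ≤ (1-t) * (r1 z j) + t * (r2 z j)
      by_cases h : j ∈ Vi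
      · simp only [hr1def, hr2def, if_pos h]
        have : (1-t) * (max (z j) ((d₂ j:ℝ))) + t * (max (z j) ((d₂ j:ℝ)))
            = max (z j) ((d₂ j:ℝ)) := by ring
        rw [this]
      · by_cases hP : j ∈ P
        · simp only [hr1def, hr2def, if_neg h, if_pos hP]
          exact seg_ge_left (le_max_left _ _) ht0
        · simp only [hr1def, hr2def, if_neg h, if_neg hP]
          have : (1-t) * z j + t * z j = z j := by ring
          rw [this]
    refine ⟨⟨fun j hj => lt_of_lt_of_le (hy1 j hj) (hge j),
      le_trans hy2 (sig_mono hann fun j _ => hge j)⟩, ?_⟩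
    rw [not_mem_Mdl_iff]
    refine Or.inl ⟨j₀, hViS₂ hj₀Vi, ?_⟩
    show (1-t) * (r1 z j₀) + t * (r2 z j₀) ≤ (d₂ j₀ : ℝ)
    simp only [hr1def, hr2def, if_pos hj₀Vi, max_eq_right hj₀le]
    have : (1-t) * (d₂ j₀:ℝ) + t * (d₂ j₀:ℝ) = (d₂ j₀:ℝ) := by ring
    rw [this]
  have hr2W : ∀ z ∈ W, r2 z ∈ W := by
    intro z hz
    have := O2 z hz 1 zero_le_one le_rfl
    rwa [seg_one] at this
  -- stage 3
  have O3 : ∀ z ∈ W, ∀ t : ℝ, 0 ≤ t → t ≤ 1 → seg (r2 z) (r3 z) t ∈ W := by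
    intro z hz t ht0 ht1
    obtain ⟨j₀, hj₀Vi, hj₀le⟩ := hfail z hz
    obtain ⟨⟨hy1, _⟩, _⟩ := hr2W z hz
    set w := seg (r2 z) (r3 z) t with hw
    have hVi_lb : ∀ j ∈ Vi, (d₂ j : ℝ) ≤ w j := by
      intro j hj
      show (d₂ j:ℝ) ≤ (1-t) * (r2 z j) + t * (r3 z j)
      simp only [hr2def, hr3def, if_pos hj]
      exact seg_ge_right (le_max_right _ _) ht1
    have hnotVi : ∀ j, j ∉ Vi → w j = r2 z j := by
      intro j hj
      show (1-t) * (r2 z j) + t * (r3 z j) = r2 z j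
      simp only [hr2def, hr3def, if_neg hj]
      ring
    refine ⟨⟨?_, ?_⟩, ?_⟩
    · intro j hj
      by_cases h : j ∈ Vi
      · have h1 : (d₁ j : ℝ) < (d₂ j : ℝ) := by exact_mod_cast hViprop j h hj
        exact lt_of_lt_of_le h1 (hVi_lb j h)
      · rw [hnotVi j h]; exact hy1 j hj
    · apply hsig_ge
      intro j hjP
      by_cases h : j ∈ Vi
      · have h1 : ((lb j : ℤ):ℝ) = (d₂ j : ℝ) - 1 := by
          simp only [hlbdef, if_pos h]; push_cast; ring
        rw [h1]
        have := hVi_lb j h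
        linarith
      · have h1 : ((lb j : ℤ):ℝ) = (M:ℝ) - 1 := by
          simp only [hlbdef, if_neg h]; push_cast; ring
        rw [hnotVi j h, h1]
        have h2 : (M:ℝ) ≤ r2 z j := by
          simp only [hr2def, if_neg h, if_pos hjP]
          exact le_max_right _ _
        linarith
    · rw [not_mem_Mdl_iff]
      refine Or.inl ⟨j₀, hViS₂ hj₀Vi, ?_⟩
      show (1-t) * (r2 z j₀) + t * (r3 z j₀) ≤ (d₂ j₀ : ℝ)
      simp only [hr2def, hr3def, if_pos hj₀Vi, max_eq_right hj₀le]
      have : (1-t) * (d₂ j₀:ℝ) + t * (d₂ j₀:ℝ) = (d₂ j₀:ℝ) := by ring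
      rw [this]
  have hr3W : ∀ z ∈ W, r3 z ∈ W := by
    intro z hz
    have := O3 z hz 1 zero_le_one le_rfl
    rwa [seg_one] at this
  -- final segment, target point
  have hpstW : pst ∈ W := by
    refine ⟨⟨?_, ?_⟩, ?_⟩
    · intro j hj
      simp only [hpstdef]
      by_cases h : j ∈ Vi
      · rw [if_pos h]
        exact_mod_cast hViprop j h hj
      · rw [if_neg h]
        by_cases hP : j ∈ P
        · rw [if_pos hP]
          have := hM1 j hP
          have : (d₁ j : ℝ) + 1 ≤ (M:ℝ) := by exact_mod_cast this
          linarith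
        · rw [if_neg hP, if_pos hj]
          linarith
    · apply hsig_ge
      intro j hjP
      simp only [hpstdef]
      by_cases h : j ∈ Vi
      · rw [if_pos h]
        have h1 : ((lb j : ℤ):ℝ) = (d₂ j : ℝ) - 1 := by
          simp only [hlbdef, if_pos h]; push_cast; ring
        rw [h1]; linarith
      · rw [if_neg h, if_pos hjP]
        have h1 : ((lb j : ℤ):ℝ) = (M:ℝ) - 1 := by
          simp only [hlbdef, if_neg h]; push_cast; ring
        rw [h1]; linarith
    · rw [not_mem_Mdl_iff]
      refine Or.inl ⟨jb, hjbS₂, ?_⟩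
      simp only [hpstdef, if_pos hjb]
      exact le_rfl
  have O4 : ∀ z ∈ W, ∀ t : ℝ, 0 ≤ t → t ≤ 1 → seg (r3 z) pst t ∈ W := by
    intro z hz t ht0 ht1
    obtain ⟨⟨hy1, _⟩, _⟩ := hr3W z hz
    obtain ⟨⟨hp1, _⟩, _⟩ := hpstW
    set w := seg (r3 z) pst t with hw
    have hViw : ∀ j ∈ Vi, w j = (d₂ j : ℝ) := by
      intro j hj
      show (1-t) * (r3 z j) + t * pst j = (d₂ j:ℝ)
      simp only [hr3def, hpstdef, if_pos hj]
      ring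
    have hPw : ∀ j, j ∈ P → j ∉ Vi → (M:ℝ) ≤ w j := by
      intro j hjP hjVi
      show (M:ℝ) ≤ (1-t) * (r3 z j) + t * pst j
      have h1 : (M:ℝ) ≤ r3 z j := by
        simp only [hr3def, if_neg hjVi, if_pos hjP]
        exact le_max_right _ _
      have h2 : pst j = (M:ℝ) := by simp only [hpstdef, if_neg hjVi, if_pos hjP]
      rw [h2]
      nlinarith [mul_nonneg (sub_nonneg.2 ht1) (sub_nonneg.2 h1)]
    refine ⟨⟨?_, ?_⟩, ?_⟩
    · intro j hj
      show (d₁ j : ℝ) < (1-t) * (r3 z j) + t * pst j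
      exact seg_gt (hy1 j hj) (hp1 j hj) ht0 ht1
    · apply hsig_ge
      intro j hjP
      by_cases h : j ∈ Vi
      · have h1 : ((lb j : ℤ):ℝ) = (d₂ j : ℝ) - 1 := by
          simp only [hlbdef, if_pos h]; push_cast; ring
        rw [h1, hViw j h]; linarith
      · have h1 : ((lb j : ℤ):ℝ) = (M:ℝ) - 1 := by
          simp only [hlbdef, if_neg h]; push_cast; ring
        rw [h1]
        have := hPw j hjP h
        linarith
    · rw [not_mem_Mdl_iff]
      refine Or.inl ⟨jb, hjbS₂, ?_⟩
      rw [hViw jb hjb]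
  -- assemble
  refine ⟨⟨pst, hpstW⟩, ?_⟩
  rw [contractible_iff_id_nullhomotopic]
  refine ⟨⟨pst, hpstW⟩, ?_⟩
  have hidW : ∀ z ∈ W, id z ∈ W := fun _ h => h
  have hcW : ∀ z ∈ W, (fun _ : Fin n → ℝ => pst) z ∈ W := fun _ _ => hpstW
  have H1 : (restr id continuous_id hidW).Homotopic (restr r1 hr1c hr1W) :=
    homotopic_restr _ _ _ _ O1
  have H2 : (restr r1 hr1c hr1W).Homotopic (restr r2 hr2c hr2W) :=
    homotopic_restr _ _ _ _ O2
  have H3 : (restr r2 hr2c hr2W).Homotopic (restr r3 hr3c hr3W) :=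
    homotopic_restr _ _ _ _ O3
  have H4 : (restr r3 hr3c hr3W).Homotopic (restr (fun _ => pst) continuous_const hcW) :=
    homotopic_restr _ _ _ _ O4
  have Hall := ((H1.trans H2).trans H3).trans H4
  have e1 : (ContinuousMap.id ↥W) = restr id continuous_id hidW := by
    apply ContinuousMap.ext; intro p; rfl
  have e2 : (ContinuousMap.const ↥W ⟨pst, hpstW⟩) = restr (fun _ => pst) continuous_const hcW := by
    apply ContinuousMap.ext; intro p; rfl
  rw [e1, e2]
  exact Hall


theorem model_main (P S₁ S₂ : Finset (Fin n)) (a : Fin n → ℚ) (d₁ d₂ : Fin n → ℤ) (e₁ e₂ : ℤ)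
    (u₁ u₂ : Fin n)
    (ha : ∀ j ∈ P, 0 < a j) (hsum : ∑ j ∈ P, a j ≤ 1)
    (hu₁ : u₁ ∈ P) (hu₁S : u₁ ∉ S₁) (hu₂ : u₂ ∈ P) (hu₂S : u₂ ∉ S₂)
    (hD : (∃ j ∈ S₂, j ∉ S₁ ∨ d₁ j < d₂ j) ∨ e₁ < e₂) :
    (Mdl P S₁ a d₁ e₁ \ Mdl P S₂ a d₂ e₂).Nonempty ∧
      ContractibleSpace ↥(Mdl P S₁ a d₁ e₁ \ Mdl P S₂ a d₂ e₂) := by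
  rcases lt_or_ge e₁ e₂ with h | h
  · exact caseA P S₁ S₂ a d₁ d₂ e₁ e₂ u₁ u₂ ha hsum hu₁ hu₁S hu₂ hu₂S h
  · rcases hD with hVi | h'
    · exact caseB P S₁ S₂ a d₁ d₂ e₁ e₂ u₂ ha hu₂ hu₂S h hVi
    · omega

/-! ### Characterization of `FSetB` -/

lemma ceil_ge_of_int_lt {k : ℤ} {y : ℝ} (h : (k : ℝ) < y) : (k : ℚ) ≤ (⌈y⌉ : ℚ) - 1 := by
  have h1 : k < ⌈y⌉ := Int.lt_ceil.2 h
  have : (k : ℚ) + 1 ≤ (⌈y⌉ : ℚ) := by exact_mod_cast h1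
  linarith

lemma Iprime_pos {n n' : ℕ} {α : Fin (n+1) → ℚ} (hα : ∀ i : Fin (n+1), i.val < n' → 0 < α i) :
    ∀ i ∈ Iprime n n', 0 < α i := by
  intro i hi
  exact hα i (by simpa [Iprime] using hi)

lemma Iprime_ne_last {n n' : ℕ} (hn'n : n' ≤ n) :
    ∀ i ∈ Iprime n n', i ≠ Fin.last n := by
  intro i hi h
  have h1 : i.val < n' := by simpa [Iprime] using hi
  rw [h] at h1
  simp only [Fin.val_last] at h1
  omega

lemma sum_Iprime_partition {n n' : ℕ} {J : Finset (Fin (n+1))} {i₀ : Fin (n+1)}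
    (hi₀ : i₀ ∈ Iprime n n' \ J) (F : Fin (n+1) → ℚ) :
    ∑ i ∈ Iprime n n', F i =
      (∑ i ∈ Iprime n n' ∩ J, F i) + (∑ i ∈ (Iprime n n' \ J).erase i₀, F i) + F i₀ := by
  have h1 := Finset.sum_inter_add_sum_sdiff (Iprime n n') J F
  have h2 : (∑ i ∈ (Iprime n n' \ J).erase i₀, F i) + F i₀ = ∑ i ∈ Iprime n n' \ J, F i :=
    Finset.sum_erase_add _ _ hi₀
  linarith

lemma FSetB_mem_iff (n n' : ℕ) (hn'n : n' ≤ n) (b : Fin (n+1) → E n) (α : Fin (n+1) → ℚ)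
    (J : Finset (Fin (n+1))) (i₀ : Fin (n+1)) (c : Fin (n+1) → ℤ)
    (hα : ∀ i : Fin (n+1), i.val < n' → 0 < α i)
    (hi₀ : i₀ ∈ Iprime n n' \ J)
    (x : E n) :
    x ∈ FSetB n n' b α J i₀ c ↔
      (∀ i ∈ J, i ≠ Fin.last n → (c i : ℝ) < ⟪x, b i⟫) ∧
      ((c (Fin.last n) : ℚ) ≤ ∑ i ∈ Iprime n n', α i * ((⌈⟪x, b i⟫⌉ : ℚ) - 1)) := by
  have hi₀I : i₀ ∈ Iprime n n' := (Finset.mem_sdiff.1 hi₀).1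
  have hi₀J : i₀ ∉ J := (Finset.mem_sdiff.1 hi₀).2
  have hαI := Iprime_pos hα
  have hαi₀ : 0 < α i₀ := hαI i₀ hi₀I
  have hαi₀' : (0:ℚ) < α i₀ := hαi₀
  constructor
  · rintro ⟨m, hadm, h1, h2, h3, h4⟩
    constructor
    · intro i hiJ hine
      by_cases hiI : i ∈ Iprime n n'
      · have hm := hadm i (Finset.mem_inter.2 ⟨hiI, hiJ⟩)
        have := h1 i (Finset.mem_inter.2 ⟨hiI, hiJ⟩)
        have hc : (c i : ℝ) ≤ (c i : ℝ) + (m i : ℝ) := by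
          have : (0:ℝ) ≤ (m i : ℝ) := by exact_mod_cast hm
          linarith
        linarith
      · exact h3 i (Finset.mem_erase.2 ⟨hine, Finset.mem_sdiff.2 ⟨hiJ, hiI⟩⟩)
    · -- σ bound
      have hpart := sum_Iprime_partition hi₀ (fun i => α i * ((⌈⟪x, b i⟫⌉ : ℚ) - 1))
      have hA : ∑ i ∈ Iprime n n' ∩ J, α i * ((c i : ℚ) + (m i : ℚ))
          ≤ ∑ i ∈ Iprime n n' ∩ J, α i * ((⌈⟪x, b i⟫⌉ : ℚ) - 1) := by
        refine Finset.sum_le_sum fun i hi => ?_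
        have hαpos := hαI i (Finset.mem_inter.1 hi).1
        have hlt := h1 i hi
        have : ((c i + m i : ℤ) : ℝ) < ⟪x, b i⟫ := by push_cast; push_cast at hlt; linarith
        have hcl := ceil_ge_of_int_lt this
        have : (c i : ℚ) + (m i : ℚ) ≤ (⌈⟪x, b i⟫⌉ : ℚ) - 1 := by push_cast at hcl ⊢; linarith
        nlinarith
      have hB : ∑ i ∈ (Iprime n n' \ J).erase i₀, α i * ((m i : ℚ))
          ≤ ∑ i ∈ (Iprime n n' \ J).erase i₀, α i * ((⌈⟪x, b i⟫⌉ : ℚ) - 1) := by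
        refine Finset.sum_le_sum fun i hi => ?_
        have hαpos := hαI i (Finset.mem_sdiff.1 (Finset.mem_of_mem_erase hi)).1
        have hcl := ceil_ge_of_int_lt (h2 i hi)
        nlinarith
      -- the ceiling condition
      have hc1 : ((ceilB n n' α J i₀ c m : ℤ) : ℚ) ≤ (⌈⟪x, b i₀⟫⌉ : ℚ) - 1 :=
        ceil_ge_of_int_lt h4
      have hc2 : ((c (Fin.last n) : ℚ) - ∑ i ∈ Iprime n n' ∩ J, α i * ((c i : ℚ) + (m i : ℚ))
          - ∑ i ∈ (Iprime n n' \ J).erase i₀, α i * (m i : ℚ)) / α i₀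
          ≤ ((ceilB n n' α J i₀ c m : ℤ) : ℚ) := Int.le_ceil _
      have hc3 : (c (Fin.last n) : ℚ) - ∑ i ∈ Iprime n n' ∩ J, α i * ((c i : ℚ) + (m i : ℚ))
          - ∑ i ∈ (Iprime n n' \ J).erase i₀, α i * (m i : ℚ)
          ≤ α i₀ * ((⌈⟪x, b i₀⟫⌉ : ℚ) - 1) := by
        have h5 := le_trans hc2 hc1
        rw [div_le_iff₀ hαi₀'] at h5
        nlinarith
      rw [hpart]
      nlinarith
  · rintro ⟨hcoord, hsig⟩
    classical
    refine ⟨fun i => if i ∈ J then ⌈⟪x, b i⟫⌉ - c i - 1 else ⌈⟪x, b i⟫⌉ - 1, ?_, ?_, ?_, ?_, ?_⟩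
    · -- admissible
      intro i hi
      obtain ⟨hiI, hiJ⟩ := Finset.mem_inter.1 hi
      simp only [if_pos hiJ]
      have hne := Iprime_ne_last hn'n i hiI
      have hlt := hcoord i hiJ hne
      have : c i < ⌈⟪x, b i⟫⌉ := Int.lt_ceil.2 hlt
      omega
    · intro i hi
      obtain ⟨hiI, hiJ⟩ := Finset.mem_inter.1 hi
      simp only [if_pos hiJ]
      have h1 : (⌈⟪x, b i⟫⌉ : ℝ) < ⟪x, b i⟫ + 1 := Int.ceil_lt_add_one _
      push_cast
      linarith
    · intro i hi
      have hiJ : i ∉ J := (Finset.mem_sdiff.1 (Finset.mem_of_mem_erase hi)).2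
      simp only [if_neg hiJ]
      have h1 : (⌈⟪x, b i⟫⌉ : ℝ) < ⟪x, b i⟫ + 1 := Int.ceil_lt_add_one _
      push_cast
      linarith
    · intro i hi
      exact hcoord i (Finset.mem_sdiff.1 (Finset.mem_of_mem_erase hi)).1
        (Finset.ne_of_mem_erase hi)
    · -- ceiling condition
      set m : Fin (n+1) → ℤ := fun i => if i ∈ J then ⌈⟪x, b i⟫⌉ - c i - 1 else ⌈⟪x, b i⟫⌉ - 1
        with hmdef
      have hA : ∑ i ∈ Iprime n n' ∩ J, α i * ((c i : ℚ) + (m i : ℚ))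
          = ∑ i ∈ Iprime n n' ∩ J, α i * ((⌈⟪x, b i⟫⌉ : ℚ) - 1) := by
        refine Finset.sum_congr rfl fun i hi => ?_
        have hiJ := (Finset.mem_inter.1 hi).2
        simp only [hmdef, if_pos hiJ]
        push_cast
        ring
      have hB : ∑ i ∈ (Iprime n n' \ J).erase i₀, α i * ((m i : ℚ))
          = ∑ i ∈ (Iprime n n' \ J).erase i₀, α i * ((⌈⟪x, b i⟫⌉ : ℚ) - 1) := by
        refine Finset.sum_congr rfl fun i hi => ?_
        have hiJ : i ∉ J := (Finset.mem_sdiff.1 (Finset.mem_of_mem_erase hi)).2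
        simp only [hmdef, if_neg hiJ]
        push_cast
        ring
      have hpart := sum_Iprime_partition hi₀ (fun i => α i * ((⌈⟪x, b i⟫⌉ : ℚ) - 1))
      have hnum : ((c (Fin.last n) : ℚ) - ∑ i ∈ Iprime n n' ∩ J, α i * ((c i : ℚ) + (m i : ℚ))
          - ∑ i ∈ (Iprime n n' \ J).erase i₀, α i * (m i : ℚ))
          ≤ α i₀ * ((⌈⟪x, b i₀⟫⌉ : ℚ) - 1) := by
        rw [hA, hB]
        rw [hpart] at hsig
        linarith
      have hdiv : ((c (Fin.last n) : ℚ) - ∑ i ∈ Iprime n n' ∩ J, α i * ((c i : ℚ) + (m i : ℚ))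
          - ∑ i ∈ (Iprime n n' \ J).erase i₀, α i * (m i : ℚ)) / α i₀
          ≤ ((⌈⟪x, b i₀⟫⌉ : ℚ) - 1) := by
        rw [div_le_iff₀ hαi₀']
        nlinarith
      have hceil : ceilB n n' α J i₀ c m ≤ ⌈⟪x, b i₀⟫⌉ - 1 := by
        apply Int.ceil_le.2
        exact_mod_cast hdiv
      have h1 : ((⌈⟪x, b i₀⟫⌉ : ℝ)) - 1 < ⟪x, b i₀⟫ := by
        have := Int.ceil_lt_add_one ⟪x, b i₀⟫
        linarith
      have h2 : ((ceilB n n' α J i₀ c m : ℤ) : ℝ) ≤ ((⌈⟪x, b i₀⟫⌉ : ℝ)) - 1 := by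
        exact_mod_cast hceil
      linarith


/-! ### index translation and the coordinate homeomorphism -/

def Pm (n n' : ℕ) : Finset (Fin n) := Finset.univ.filter fun j => (j : ℕ) < n'

lemma Iprime_eq_image {n n' : ℕ} (hn'n : n' ≤ n) :
    Iprime n n' = (Pm n n').image Fin.castSucc := by
  ext i
  simp only [Iprime, Pm, Finset.mem_filter, Finset.mem_univ, true_and, Finset.mem_image]
  constructor
  · intro hi
    have hlt : (i : ℕ) < n := lt_of_lt_of_le hi hn'n
    refine ⟨⟨(i : ℕ), hlt⟩, by simpa using hi, ?_⟩
    ext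
    simp
  · rintro ⟨j, hj, rfl⟩
    simpa using hj

lemma sum_Iprime_eq {n n' : ℕ} (hn'n : n' ≤ n) (F : Fin (n+1) → ℚ) :
    ∑ i ∈ Iprime n n', F i = ∑ j ∈ Pm n n', F j.castSucc := by
  rw [Iprime_eq_image hn'n]
  exact Finset.sum_image fun x _ y _ h => Fin.castSucc_injective n h

lemma exists_phi (n : ℕ) (b : Fin (n+1) → E n)
    (hb : LinearIndependent ℝ fun i : Fin n => b i.castSucc)
    (hspan : Submodule.span ℝ (Set.range fun i : Fin n => b i.castSucc) = ⊤) :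
    ∃ Φ : E n ≃ₜ (Fin n → ℝ), ∀ (x : E n) (j : Fin n), Φ x j = ⟪x, b j.castSucc⟫ := by
  classical
  set f : E n →ₗ[ℝ] (Fin n → ℝ) :=
    { toFun := fun x j => ⟪x, b j.castSucc⟫
      map_add' := fun x y => by funext j; exact inner_add_left _ _ _
      map_smul' := fun r x => by funext j; exact real_inner_smul_left _ _ _ } with hfdef
  have hker : ∀ x : E n, f x = 0 → x = 0 := by
    intro x hx
    have h0 : ∀ j : Fin n, ⟪x, b j.castSucc⟫ = 0 := fun j => congrFun hx j
    have hall : ∀ v ∈ Submodule.span ℝ (Set.range fun i : Fin n => b i.castSucc),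
        ⟪x, v⟫ = 0 := by
      intro v hv
      induction hv using Submodule.span_induction with
      | mem v hv => obtain ⟨j, rfl⟩ := hv; exact h0 j
      | zero => exact inner_zero_right x
      | add u w _ _ hu hw => rw [inner_add_right, hu, hw]; ring
      | smul r u _ hu => rw [real_inner_smul_right, hu]; ring
    have hx2 : ⟪x, x⟫ = 0 := hall x (by rw [hspan]; trivial)
    exact inner_self_eq_zero.1 hx2
  have hinj : Function.Injective f := LinearMap.ker_eq_bot.1 (LinearMap.ker_eq_bot'.2 hker)
  have hdim : Module.finrank ℝ (E n) = Module.finrank ℝ (Fin n → ℝ) := by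
    rw [finrank_euclideanSpace_fin, Module.finrank_fintype_fun_eq_card, Fintype.card_fin]
  have hsurj : Function.Surjective f :=
    (LinearMap.injective_iff_surjective_of_finrank_eq_finrank hdim).1 hinj
  set Φₗ : E n ≃ₗ[ℝ] (Fin n → ℝ) := LinearEquiv.ofBijective f ⟨hinj, hsurj⟩ with hΦₗ
  refine ⟨Φₗ.toContinuousLinearEquiv.toHomeomorph, fun x j => rfl⟩

end Stmt4

theorem stmt4' (n n' : ℕ) (hn'1 : 1 ≤ n') (hn'n : n' ≤ n)
    (b : Fin (n + 1) → E n) (α : Fin (n + 1) → ℚ)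
    (hb : LinearIndependent ℝ fun i : Fin n => b i.castSucc)
    (hspan : Submodule.span ℝ (Set.range fun i : Fin n => b i.castSucc) = ⊤)
    (hα : ∀ i : Fin (n + 1), i.val < n' → 0 < α i)
    (hαsum : ∑ i ∈ Iprime n n', α i ≤ 1)
    (J₁ J₂ : Finset (Fin (n + 1)))
    (hJ₁last : Fin.last n ∈ J₁) (hJ₂last : Fin.last n ∈ J₂)
    (i₁₀ i₂₀ : Fin (n + 1))
    (hi₁₀ : i₁₀ ∈ Iprime n n' \ J₁) (hi₂₀ : i₂₀ ∈ Iprime n n' \ J₂)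
    (c₁ c₂ : Fin (n + 1) → ℤ)
    (hC : ¬ CSet n b J₁ c₁ ⊆ CSet n b J₂ c₂) :
    ¬ FSetB n n' b α J₁ i₁₀ c₁ ⊆ FSetB n n' b α J₂ i₂₀ c₂ ∧
      ContractibleSpace ↥(FSetB n n' b α J₁ i₁₀ c₁ \ FSetB n n' b α J₂ i₂₀ c₂) := by
  classical
  obtain ⟨Φ, hΦ⟩ := Stmt4.exists_phi n b hb hspan
  set P := Stmt4.Pm n n' with hPdef
  set a : Fin n → ℚ := fun j => α j.castSucc with hadef
  set S₁' : Finset (Fin n) := Finset.univ.filter (fun j => j.castSucc ∈ J₁) with hS₁def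
  set S₂' : Finset (Fin n) := Finset.univ.filter (fun j => j.castSucc ∈ J₂) with hS₂def
  set dd₁ : Fin n → ℤ := fun j => c₁ j.castSucc with hd₁def
  set dd₂ : Fin n → ℤ := fun j => c₂ j.castSucc with hd₂def
  -- the key set identification
  have key : ∀ (J : Finset (Fin (n+1))) (i₀ : Fin (n+1)) (cc : Fin (n+1) → ℤ),
      i₀ ∈ Iprime n n' \ J →
      FSetB n n' b α J i₀ cc =
        Φ ⁻¹' (Stmt4.Mdl (Stmt4.Pm n n') (Finset.univ.filter fun j : Fin n => j.castSucc ∈ J)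
          a (fun j => cc j.castSucc) (cc (Fin.last n))) := by
    intro J i₀ cc hi₀
    have hsum_eq : ∀ x : E n, ∑ i ∈ Iprime n n', α i * ((⌈⟪x, b i⟫⌉ : ℚ) - 1)
        = Stmt4.sig (Stmt4.Pm n n') a (Φ x) := by
      intro x
      unfold Stmt4.sig
      rw [Stmt4.sum_Iprime_eq hn'n (fun i => α i * ((⌈⟪x, b i⟫⌉ : ℚ) - 1))]
      exact Finset.sum_congr rfl fun j _ => by rw [hΦ]
    ext x
    rw [Stmt4.FSetB_mem_iff n n' hn'n b α J i₀ cc hα hi₀ x]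
    simp only [Set.mem_preimage]
    unfold Stmt4.Mdl
    simp only [Set.mem_setOf_eq]
    constructor
    · rintro ⟨h1, h2⟩
      constructor
      · intro j hj
        have hjJ : j.castSucc ∈ J := by
          simpa using (Finset.mem_filter.1 hj).2
        have := h1 _ hjJ (Fin.castSucc_lt_last j).ne
        rw [hΦ]
        exact this
      · rw [← hsum_eq x]
        exact h2
    · rintro ⟨h1, h2⟩
      refine ⟨?_, by rw [hsum_eq x]; exact h2⟩
      intro i hiJ hne
      have hj : (i.castPred hne) ∈ Finset.univ.filter (fun j : Fin n => j.castSucc ∈ J) := by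
        refine Finset.mem_filter.2 ⟨Finset.mem_univ _, ?_⟩
        rwa [Fin.castSucc_castPred]
      have := h1 _ hj
      rw [hΦ] at this
      rw [← Fin.castSucc_castPred i hne]
      exact this
  have hF₁ : FSetB n n' b α J₁ i₁₀ c₁ =
      Φ ⁻¹' (Stmt4.Mdl (Stmt4.Pm n n') S₁' a dd₁ (c₁ (Fin.last n))) := key J₁ i₁₀ c₁ hi₁₀
  have hF₂ : FSetB n n' b α J₂ i₂₀ c₂ =
      Φ ⁻¹' (Stmt4.Mdl (Stmt4.Pm n n') S₂' a dd₂ (c₂ (Fin.last n))) := key J₂ i₂₀ c₂ hi₂₀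
  -- derive the combinatorial disjunction from hC
  have hD : (∃ j ∈ S₂', j ∉ S₁' ∨ dd₁ j < dd₂ j) ∨ c₁ (Fin.last n) < c₂ (Fin.last n) := by
    by_contra hcon
    push_neg at hcon
    obtain ⟨h1, h2⟩ := hcon
    apply hC
    intro x hx i hiJ₂
    by_cases hne : i = Fin.last n
    · subst hne
      have hx1 := hx _ hJ₁last
      have : (c₂ (Fin.last n) : ℝ) ≤ (c₁ (Fin.last n) : ℝ) := by exact_mod_cast h2
      linarith
    · have hj : (i.castPred hne) ∈ S₂' := by
        refine Finset.mem_filter.2 ⟨Finset.mem_univ _, ?_⟩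
        rwa [Fin.castSucc_castPred]
      obtain ⟨hjS₁', hle⟩ := h1 _ hj
      have hjJ₁ : (i.castPred hne).castSucc ∈ J₁ := by
        simpa using (Finset.mem_filter.1 hjS₁').2
      have hx1 := hx _ hjJ₁
      rw [Fin.castSucc_castPred] at hx1
      have hcc : (c₂ i : ℝ) ≤ (c₁ i : ℝ) := by
        have := hle
        simp only [hd₁def, hd₂def] at this
        rw [Fin.castSucc_castPred] at this
        exact_mod_cast this
      linarith
  -- model hypotheses
  have hi₁₀I := (Finset.mem_sdiff.1 hi₁₀).1
  have hi₂₀I := (Finset.mem_sdiff.1 hi₂₀).1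
  have hne₁ : i₁₀ ≠ Fin.last n := Stmt4.Iprime_ne_last hn'n i₁₀ hi₁₀I
  have hne₂ : i₂₀ ≠ Fin.last n := Stmt4.Iprime_ne_last hn'n i₂₀ hi₂₀I
  set u₁ := i₁₀.castPred hne₁ with hu₁def
  set u₂ := i₂₀.castPred hne₂ with hu₂def
  have hu₁P : u₁ ∈ Stmt4.Pm n n' := by
    refine Finset.mem_filter.2 ⟨Finset.mem_univ _, ?_⟩
    have : (i₁₀ : ℕ) < n' := by simpa [Iprime] using hi₁₀I
    simpa [hu₁def] using this
  have hu₂P : u₂ ∈ Stmt4.Pm n n' := by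
    refine Finset.mem_filter.2 ⟨Finset.mem_univ _, ?_⟩
    have : (i₂₀ : ℕ) < n' := by simpa [Iprime] using hi₂₀I
    simpa [hu₂def] using this
  have hu₁S : u₁ ∉ S₁' := by
    intro h
    have : u₁.castSucc ∈ J₁ := by simpa using (Finset.mem_filter.1 h).2
    rw [hu₁def, Fin.castSucc_castPred] at this
    exact (Finset.mem_sdiff.1 hi₁₀).2 this
  have hu₂S : u₂ ∉ S₂' := by
    intro h
    have : u₂.castSucc ∈ J₂ := by simpa using (Finset.mem_filter.1 h).2
    rw [hu₂def, Fin.castSucc_castPred] at this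
    exact (Finset.mem_sdiff.1 hi₂₀).2 this
  have haP : ∀ j ∈ Stmt4.Pm n n', 0 < a j := by
    intro j hj
    have : (j : ℕ) < n' := by simpa [Stmt4.Pm] using hj
    exact hα j.castSucc (by simpa using this)
  have hsumP : ∑ j ∈ Stmt4.Pm n n', a j ≤ 1 := by
    have := Stmt4.sum_Iprime_eq hn'n α
    rw [this] at hαsum
    exact hαsum
  obtain ⟨hne, hcontr⟩ := Stmt4.model_main (Stmt4.Pm n n') S₁' S₂' a dd₁ dd₂
    (c₁ (Fin.last n)) (c₂ (Fin.last n)) u₁ u₂ haP hsumP hu₁P hu₁S hu₂P hu₂S hD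
  have hdiff : FSetB n n' b α J₁ i₁₀ c₁ \ FSetB n n' b α J₂ i₂₀ c₂ =
      Φ ⁻¹' (Stmt4.Mdl (Stmt4.Pm n n') S₁' a dd₁ (c₁ (Fin.last n)) \
        Stmt4.Mdl (Stmt4.Pm n n') S₂' a dd₂ (c₂ (Fin.last n))) := by
    rw [hF₁, hF₂, Set.preimage_diff]
  obtain ⟨z₀, hz₀⟩ := hne
  constructor
  · rw [Set.not_subset]
    refine ⟨Φ.symm z₀, ?_, ?_⟩
    · rw [hF₁]
      simp only [Set.mem_preimage, Homeomorph.apply_symm_apply]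
      exact hz₀.1
    · rw [hF₂]
      simp only [Set.mem_preimage, Homeomorph.apply_symm_apply]
      exact hz₀.2
  · rw [hdiff]
    haveI := hcontr
    exact ((Φ.image _).trans
      (Homeomorph.setCongr (Set.image_preimage_eq _ Φ.surjective))).contractibleSpace

end Stmt4Aux

/-- Setup B: for `J₁, J₂ ∈ Λ` with `n+1 ∈ J₁` and `n+1 ∈ J₂`, integer
data `c¹, c²`, and choices `i_{1,0} ∈ I'∖J₁`, `i_{2,0} ∈ I'∖J₂`: if `C(J₁,c¹)` is not
contained in `C(J₂,c²)`, then `F(J₁,c¹)` is not contained in `F(J₂,c²)`, and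
`F(J₁,c¹) ∖ F(J₂,c²)` with the subspace topology is contractible. -/
theorem stmt4 (n n' : ℕ) (hn'1 : 1 ≤ n') (hn'n : n' ≤ n)
    (b : Fin (n + 1) → E n) (α : Fin (n + 1) → ℚ)
    (hb : LinearIndependent ℝ fun i : Fin n => b i.castSucc)
    (hspan : Submodule.span ℝ (Set.range fun i : Fin n => b i.castSucc) = ⊤)
    (hα : ∀ i : Fin (n + 1), i.val < n' → 0 < α i)
    (hαsum : ∑ i ∈ Iprime n n', α i ≤ 1)
    (hlast : b (Fin.last n) = ∑ i ∈ Iprime n n', (α i : ℝ) • b i)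
    (J₁ J₂ : Finset (Fin (n + 1)))
    (hJ₁ne : J₁ ≠ Finset.univ) (hJ₁I : ¬ Iprime n n' ⊆ J₁)
    (hJ₂ne : J₂ ≠ Finset.univ) (hJ₂I : ¬ Iprime n n' ⊆ J₂)
    (hJ₁last : Fin.last n ∈ J₁) (hJ₂last : Fin.last n ∈ J₂)
    (i₁₀ i₂₀ : Fin (n + 1))
    (hi₁₀ : i₁₀ ∈ Iprime n n' \ J₁) (hi₂₀ : i₂₀ ∈ Iprime n n' \ J₂)
    (c₁ c₂ : Fin (n + 1) → ℤ)
    (hC : ¬ CSet n b J₁ c₁ ⊆ CSet n b J₂ c₂) :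
    ¬ FSetB n n' b α J₁ i₁₀ c₁ ⊆ FSetB n n' b α J₂ i₂₀ c₂ ∧
      ContractibleSpace ↥(FSetB n n' b α J₁ i₁₀ c₁ \ FSetB n n' b α J₂ i₂₀ c₂) := by
  exact stmt4' n n' hn'1 hn'n b α hb hspan hα hαsum J₁ J₂ hJ₁last hJ₂last i₁₀ i₂₀ hi₁₀ hi₂₀ c₁ c₂ hC
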